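/- The surgery formula (SF) of the dot-free sl(2) foam theory holds for the TQFT structure maps: for every x ∈ A, x = (1/2)·ε_C(m(Δ_C(x)))·1 + (1/2)·ε_C(x)·m(Δ_C(1)); equivalently, id_A = (1/2)·ι_C ∘ (ε_C ∘ m ∘ Δ_C) + (1/2)·(m ∘ Δ_C ∘ ι_C) ∘ ε_C, where ι_C : R → A is the unit map. -/

import Mathlib

set_option maxHeartbeats 1000000


open TensorProduct Polynomial

noncomputable section

variable {R : Type*} [CommRing R]

/-- The algebra `A = R[X]/(X² - h·X - a)`. -/
abbrev FrobA (a h : R) : Type _ := AdjoinRoot (X ^ 2 - C h * X - C a)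

/-- The image of the variable `X` in `A`. -/
abbrev FrobX (a h : R) : FrobA a h := AdjoinRoot.root _

theorem frobX_sq (a h : R) : FrobX a h * FrobX a h = h • FrobX a h + a • 1 := by
  have h0 : AdjoinRoot.mk (X ^ 2 - C h * X - C a) (X ^ 2 - C h * X - C a) = 0 :=
    AdjoinRoot.mk_self
  have : FrobX a h ^ 2 - h • FrobX a h - a • (1 : FrobA a h) = 0 := by
    simpa [map_sub, map_mul, map_pow, Algebra.smul_def] using h0
  have h2 : FrobX a h ^ 2 = h • FrobX a h + a • (1 : FrobA a h) := by
    linear_combination this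
  rw [← pow_two]; exact h2

theorem frobX_pow_mem (a h : R) (n : ℕ) :
    FrobX a h ^ n ∈ Submodule.span R {(1 : FrobA a h), FrobX a h} := by
  induction n using Nat.twoStepInduction with
  | zero => rw [pow_zero]; exact Submodule.subset_span (Set.mem_insert _ _)
  | one => rw [pow_one]; exact Submodule.subset_span (Set.mem_insert_of_mem _ rfl)
  | more n ih1 ih2 =>
    have : FrobX a h ^ (n + 2) = h • FrobX a h ^ (n + 1) + a • FrobX a h ^ n := by
      have := frobX_sq a h
      calc FrobX a h ^ (n + 2) = FrobX a h ^ n * (FrobX a h * FrobX a h) := by ring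
        _ = FrobX a h ^ n * (h • FrobX a h + a • 1) := by rw [this]
        _ = h • FrobX a h ^ (n + 1) + a • FrobX a h ^ n := by
            simp [mul_add, mul_smul_comm, mul_one, pow_succ]
    rw [this]
    exact Submodule.add_mem _ (Submodule.smul_mem _ _ ih2) (Submodule.smul_mem _ _ ih1)

theorem frob_span (a h : R) (x : FrobA a h) :
    x ∈ Submodule.span R {(1 : FrobA a h), FrobX a h} := by
  induction x using AdjoinRoot.induction_on with
  | ih p =>
    rw [← AdjoinRoot.aeval_eq]
    induction p using Polynomial.induction_on' with
    | add p q hp hq => rw [map_add]; exact Submodule.add_mem _ hp hq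
    | monomial n r =>
      have : (aeval (AdjoinRoot.root (X ^ 2 - C h * X - C a))) (monomial n r)
          = r • FrobX a h ^ n := by
        simp [aeval_monomial, Algebra.smul_def]
      rw [this]
      exact Submodule.smul_mem _ _ (frobX_pow_mem a h n)

/-- the surgery formula (SF):
`x = (1/2)·ε_C(m(Δ_C(x)))·1 + (1/2)·ε_C(x)·m(Δ_C(1))` for every `x ∈ A`. -/
theorem surgery_formula (a h : R) [Invertible (2 : R)]
    (ΔC : FrobA a h →ₗ[R] FrobA a h ⊗[R] FrobA a h)
    (hΔ1 : ΔC 1 = (1 : FrobA a h) ⊗ₜ[R] FrobX a h + FrobX a h ⊗ₜ[R] (1 : FrobA a h)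
      - h • ((1 : FrobA a h) ⊗ₜ[R] (1 : FrobA a h)))
    (hΔX : ΔC (FrobX a h) = FrobX a h ⊗ₜ[R] FrobX a h
      + a • ((1 : FrobA a h) ⊗ₜ[R] (1 : FrobA a h)))
    (εC : FrobA a h →ₗ[R] R)
    (hε1 : εC 1 = 0) (hεX : εC (FrobX a h) = 1) :
    ∀ x : FrobA a h,
      x = (⅟(2 : R) * εC (LinearMap.mul' R (FrobA a h) (ΔC x))) • (1 : FrobA a h)
        + (⅟(2 : R) * εC x) • LinearMap.mul' R (FrobA a h) (ΔC 1) := by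
  have hm1 : LinearMap.mul' R (FrobA a h) (ΔC 1)
      = FrobX a h + FrobX a h - h • 1 := by
    rw [hΔ1]; simp [LinearMap.mul'_apply]
  have hmX : LinearMap.mul' R (FrobA a h) (ΔC (FrobX a h))
      = h • FrobX a h + a • 1 + a • 1 := by
    rw [hΔX]; simp [LinearMap.mul'_apply, frobX_sq]
  -- the right-hand side as a linear map
  let F : FrobA a h →ₗ[R] FrobA a h :=
    ((⅟(2 : R)) • (εC ∘ₗ (LinearMap.mul' R (FrobA a h) ∘ₗ ΔC))).smulRight 1
      + ((⅟(2 : R)) • εC).smulRight (LinearMap.mul' R (FrobA a h) (ΔC 1))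
  have hFapp : ∀ x : FrobA a h,
      F x = (⅟(2 : R) * εC (LinearMap.mul' R (FrobA a h) (ΔC x))) • (1 : FrobA a h)
        + (⅟(2 : R) * εC x) • LinearMap.mul' R (FrobA a h) (ΔC 1) := by
    intro x
    simp [F, LinearMap.smulRight_apply, smul_eq_mul]
  suffices hF : ∀ x : FrobA a h, x = F x by
    intro x; rw [← hFapp]; exact hF x
  have h1 : (1 : FrobA a h) = F 1 := by
    rw [hFapp, hm1, map_sub, map_add, map_smul, hε1, hεX]
    simp only [smul_eq_mul, mul_zero, sub_zero, one_add_one_eq_two, invOf_mul_self, one_smul,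
      zero_smul, add_zero]
  have hX : FrobX a h = F (FrobX a h) := by
    rw [hFapp, hmX, hm1]
    simp only [map_add, map_smul, hε1, hεX, smul_eq_mul, mul_one, mul_zero, add_zero]
    rw [smul_sub, smul_add, ← add_smul, invOf_two_add_invOf_two, one_smul, smul_smul]
    abel
  intro x
  refine Submodule.span_induction (p := fun y _ => y = F y) ?_ ?_ ?_ ?_ (frob_span a h x)
  · rintro y (rfl | rfl)
    · exact h1
    · exact hX
  · simp
  · intro y z _ _ hy hz; rw [map_add, ← hy, ← hz]
  · intro r y _ hy; rw [map_smul, ← hy]
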